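/- Let μ ⊆ λ and ν be partitions with |μ| + |ν| = |λ|. The assignment φ which sends a tableau T ∈ CST^ν(λ/μ) to the tableau Y of shape λ^t/μ^t whose j-th column, i.e. the entries Y(μ_j+1, j) ≤ Y(μ_j+2, j) ≤ … ≤ Y(λ_j, j), is the weakly increasing sequence of column indices, counted with multiplicity, of the occurrences of the entry j in T, is a well-defined bijection φ : CST^ν(λ/μ) → CST^{λ^t/μ^t}(ν^t). -/

import Mathlib

noncomputable section

namespace ABW

/-- The underlying cell set of a (straight) Young diagram. -/
def ydShape (ν : YoungDiagram) : Set (ℕ × ℕ) := {c | c ∈ ν}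

/-- The cell set of the skew diagram `λ/μ`. -/
def skewShape (lam mu : YoungDiagram) : Set (ℕ × ℕ) := {c | c ∈ lam ∧ c ∉ mu}

/-- `T` is a column-standard tableau of the given shape: its entries are positive exactly on
the cells of the shape, and each column is weakly increasing from top to bottom. -/
def IsColumnStandard (shape : Set (ℕ × ℕ)) (T : ℕ → ℕ → ℕ) : Prop :=
  (∀ i j, (i, j) ∈ shape → 1 ≤ T i j) ∧
  (∀ i j, (i, j) ∉ shape → T i j = 0) ∧
  (∀ i i' j, (i, j) ∈ shape → (i', j) ∈ shape → i ≤ i' → T i j ≤ T i' j)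

/-- `T` has the prescribed content: the entry `k+1` occurs exactly `content k` times
(entries and multiplicities are indexed from `1`, i.e. `content k` counts `k+1`). -/
def HasContentFn (shape : Set (ℕ × ℕ)) (content : ℕ → ℕ) (T : ℕ → ℕ → ℕ) : Prop :=
  ∀ k, Set.ncard {c : ℕ × ℕ | c ∈ shape ∧ T c.1 c.2 = k + 1} = content k

/-- An element of `CST^ν(λ/μ)`: a column-standard tableau of shape `ν` and content `λ/μ`. -/
def MemCSTshape (lam mu ν : YoungDiagram) (T : ℕ → ℕ → ℕ) : Prop :=
  IsColumnStandard (ydShape ν) T ∧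
  HasContentFn (ydShape ν) (fun k => lam.rowLen k - mu.rowLen k) T

/-- An element of `CST^{λᵗ/μᵗ}(νᵗ)`: a column-standard tableau of shape `λᵗ/μᵗ` and
content `νᵗ`. -/
def MemCSTtranspose (lam mu ν : YoungDiagram) (Y : ℕ → ℕ → ℕ) : Prop :=
  IsColumnStandard (skewShape lam.transpose mu.transpose) Y ∧
  HasContentFn (skewShape lam.transpose mu.transpose) (fun c => ν.colLen c) Y

/-- The defining relation of the bijection `φ`: for every `j` and every column index `c`,
the number of cells of the `j`-th column of `Y` (of shape `λᵗ/μᵗ`) with entry `c+1` equals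
the number of occurrences of the entry `j+1` in the `c`-th column of `T` (of shape `ν`);
that is, the `j`-th column of `Y` is the weakly increasing sequence of the column indices,
counted with multiplicity, of the occurrences of the entry `j` in `T` (columns and entries
are `0`-indexed and `1`-indexed respectively, matched by a shift). -/
def Corr (lam mu ν : YoungDiagram) (T Y : ℕ → ℕ → ℕ) : Prop :=
  ∀ j c : ℕ,
    Set.ncard {i : ℕ | (i, j) ∈ skewShape lam.transpose mu.transpose ∧ Y i j = c + 1}
      = Set.ncard {r : ℕ | (r, c) ∈ ν ∧ T r c = j + 1}

end ABW

open ABW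

namespace ABW9


open Finset

def S (m : ℕ → ℕ) (k : ℕ) : ℕ := ∑ c ∈ Finset.range k, m c

lemma S_mono (m : ℕ → ℕ) : Monotone (S m) := fun _ _ h =>
  Finset.sum_le_sum_of_subset (Finset.range_subset_range.2 h)

lemma S_succ (m : ℕ → ℕ) (k : ℕ) : S m (k+1) = S m k + m k :=
  Finset.sum_range_succ m k

lemma S_le {m : ℕ → ℕ} {B N : ℕ} (hB : ∀ c, B ≤ c → m c = 0) (htot : S m B = N) :
    ∀ k, S m k ≤ N := by
  intro k
  rcases le_total k B with h | h
  · exact htot ▸ S_mono m h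
  · have : S m k = S m B := by
      refine (Finset.sum_subset (Finset.range_subset_range.2 h) ?_).symm
      intro c hc hc'
      exact hB c (by simpa using hc')
    omega

def valAt (m : ℕ → ℕ) (x : ℕ) : ℕ := sInf {c | x < S m (c+1)}

lemma valAt_spec {m : ℕ → ℕ} {B N x : ℕ} (hB : ∀ c, B ≤ c → m c = 0) (htot : S m B = N)
    (hx : x < N) : S m (valAt m x) ≤ x ∧ x < S m (valAt m x + 1) := by
  have hne : {c | x < S m (c+1)}.Nonempty := by
    refine ⟨B, ?_⟩
    simp only [Set.mem_setOf_eq, S_succ, hB B le_rfl, htot]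
    omega
  have hmem := Nat.sInf_mem hne
  refine ⟨?_, hmem⟩
  rcases Nat.eq_zero_or_pos (valAt m x) with h0 | h0
  · simp [h0, S]
  · have := Nat.notMem_of_lt_sInf (show valAt m x - 1 < sInf {c | x < S m (c+1)} by
      unfold valAt at h0 ⊢; omega)
    simp only [Set.mem_setOf_eq, not_lt] at this
    have : S m (valAt m x - 1 + 1) ≤ x := this
    have he : valAt m x - 1 + 1 = valAt m x := by omega
    rwa [he] at this

lemma valAt_eq {m : ℕ → ℕ} {x c : ℕ} (h1 : S m c ≤ x) (h2 : x < S m (c+1)) :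
    valAt m x = c := by
  have hmem : c ∈ {c | x < S m (c+1)} := h2
  have hle : valAt m x ≤ c := Nat.sInf_le hmem
  rcases eq_or_lt_of_le hle with heq | hlt
  · exact heq
  · exfalso
    have h3 : x < S m (valAt m x + 1) := Nat.sInf_mem ⟨c, hmem⟩
    have h4 : S m (valAt m x + 1) ≤ S m c := S_mono m (by omega)
    omega

lemma valAt_count {m : ℕ → ℕ} {B N : ℕ} (hB : ∀ c, B ≤ c → m c = 0) (htot : S m B = N)
    (c : ℕ) :
    ((Finset.range N).filter (fun x => valAt m x = c)).card = m c := by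
  have hss : ∀ k, S m k ≤ N := S_le hB htot
  have : (Finset.range N).filter (fun x => valAt m x = c)
      = Finset.Ico (S m c) (S m (c+1)) := by
    ext x
    simp only [Finset.mem_filter, Finset.mem_range, Finset.mem_Ico]
    constructor
    · rintro ⟨hx, rfl⟩
      exact (valAt_spec hB htot hx)
    · rintro ⟨h1, h2⟩
      exact ⟨lt_of_lt_of_le h2 (hss _), valAt_eq h1 h2⟩
  rw [this, Nat.card_Ico, S_succ]
  omega

/-- canonical column filling -/
def colg (m : ℕ → ℕ) (a N : ℕ) (i : ℕ) : ℕ :=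
  if a ≤ i ∧ i < a + N then valAt m (i - a) + 1 else 0

def ColOK (m : ℕ → ℕ) (a N : ℕ) (g : ℕ → ℕ) : Prop :=
  (∀ i, a ≤ i → i < a + N → 1 ≤ g i) ∧
  (∀ i, ¬ (a ≤ i ∧ i < a + N) → g i = 0) ∧
  (∀ i i', a ≤ i → i ≤ i' → i' < a + N → g i ≤ g i') ∧
  (∀ c, ((Finset.Ico a (a+N)).filter (fun i => g i = c + 1)).card = m c)

lemma colg_ok {m : ℕ → ℕ} {B N : ℕ} (a : ℕ) (hB : ∀ c, B ≤ c → m c = 0)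
    (htot : S m B = N) : ColOK m a N (colg m a N) := by
  refine ⟨?_, ?_, ?_, ?_⟩
  · intro i h1 h2; simp [colg, h1, h2]
  · intro i h; simp [colg, h]
  · intro i i' h1 h2 h3
    have hi : a ≤ i ∧ i < a + N := ⟨h1, by omega⟩
    have hi' : a ≤ i' ∧ i' < a + N := ⟨by omega, h3⟩
    simp only [colg, if_pos hi, if_pos hi', add_le_add_iff_right]
    have hx' : i' - a < N := by omega
    have h2' := (valAt_spec hB htot hx').2
    have hmem : i - a < S m (valAt m (i' - a) + 1) := by omega
    exact Nat.sInf_le hmem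
  · intro c
    rw [← valAt_count hB htot c]
    refine Finset.card_bij' (fun i _ => i - a) (fun x _ => x + a) ?_ ?_ ?_ ?_
    · intro i hi
      simp only [Finset.mem_filter, Finset.mem_Ico] at hi
      obtain ⟨⟨h1, h2⟩, h3⟩ := hi
      simp only [Finset.mem_filter, Finset.mem_range]
      have : colg m a N i = valAt m (i - a) + 1 := by simp [colg, h1, h2]
      constructor
      · omega
      · omega
    · intro x hx
      simp only [Finset.mem_filter, Finset.mem_range] at hx
      simp only [Finset.mem_filter, Finset.mem_Ico]
      have h1 : a ≤ x + a := by omega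
      have h2 : x + a < a + N := by omega
      constructor
      · omega
      · simp [colg, h1, h2, Nat.add_sub_cancel, hx.2]
    · intro i hi
      simp only [Finset.mem_filter, Finset.mem_Ico] at hi
      show i - a + a = i
      omega
    · intro x hx
      show x + a - a = x
      omega

lemma col_char {m : ℕ → ℕ} {B N : ℕ} {a : ℕ} {g : ℕ → ℕ}
    (hB : ∀ c, B ≤ c → m c = 0) (htot : S m B = N) (hg : ColOK m a N g)
    {i : ℕ} (h1 : a ≤ i) (h2 : i < a + N) (c : ℕ) :
    (g i ≤ c + 1 ↔ i - a < S m (c+1)) := by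
  obtain ⟨hpos, _, hmono, hcount⟩ := hg
  set A := (Finset.Ico a (a+N)).filter (fun i => g i ≤ c + 1) with hA
  have hcard : A.card = S m (c+1) := by
    rw [Finset.card_eq_sum_card_fiberwise
      (f := fun i => g i - 1) (t := Finset.range (c+1)) ?_]
    · rw [S]
      refine Finset.sum_congr rfl ?_
      intro c' hc'
      simp only [Finset.mem_range] at hc'
      rw [← hcount c']
      apply congrArg Finset.card
      ext i
      simp only [hA, Finset.mem_filter, Finset.mem_Ico]
      constructor
      · rintro ⟨⟨⟨hi1, hi2⟩, hle⟩, hsub⟩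
        have := hpos i hi1 hi2
        exact ⟨⟨hi1, hi2⟩, by omega⟩
      · rintro ⟨⟨hi1, hi2⟩, heq⟩
        exact ⟨⟨⟨hi1, hi2⟩, by omega⟩, by omega⟩
    · intro i hi
      simp only [hA, Finset.mem_coe, Finset.mem_filter, Finset.mem_Ico] at hi
      have := hpos i hi.1.1 hi.1.2
      simp only [Finset.mem_coe, Finset.mem_range]
      omega
  have key : i ∈ A ↔ i - a < A.card := by
    constructor
    · intro hiA
      have hsub : Finset.Ico a (i+1) ⊆ A := by
        intro i'' h''
        simp only [Finset.mem_Ico] at h''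
        simp only [hA, Finset.mem_filter, Finset.mem_Ico] at hiA ⊢
        refine ⟨⟨h''.1, by omega⟩, ?_⟩
        exact le_trans (hmono i'' i h''.1 (by omega) h2) hiA.2
      have := Finset.card_le_card hsub
      rw [Nat.card_Ico] at this
      omega
    · intro hlt
      by_contra hni
      have hsub : A ⊆ Finset.Ico a i := by
        intro i' h'
        simp only [hA, Finset.mem_filter, Finset.mem_Ico] at h' hni ⊢
        refine ⟨h'.1.1, ?_⟩
        by_contra hge
        push_neg at hge
        exact hni ⟨⟨h1, h2⟩, le_trans (hmono i i' h1 hge h'.1.2) h'.2⟩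
      have := Finset.card_le_card hsub
      rw [Nat.card_Ico] at this
      omega
  have hmem : i ∈ A ↔ g i ≤ c + 1 := by
    simp [hA, Finset.mem_filter, Finset.mem_Ico, h1, h2]
  rw [← hmem, key, hcard]

lemma col_unique {m : ℕ → ℕ} {B N a : ℕ} {g g' : ℕ → ℕ}
    (hB : ∀ c, B ≤ c → m c = 0) (htot : S m B = N)
    (hg : ColOK m a N g) (hg' : ColOK m a N g') : ∀ i, g i = g' i := by
  intro i
  by_cases hi : a ≤ i ∧ i < a + N
  · have hc1 := col_char hB htot hg hi.1 hi.2
    have hc2 := col_char hB htot hg' hi.1 hi.2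
    have hp := hg.1 i hi.1 hi.2
    have hp' := hg'.1 i hi.1 hi.2
    have e1 := (hc1 (g' i - 1)).trans (hc2 (g' i - 1)).symm
    have e2 := (hc1 (g i - 1)).trans (hc2 (g i - 1)).symm
    omega
  · rw [hg.2.1 i hi, hg'.2.1 i hi]



variable {lam mu ν : YoungDiagram}

lemma mem_skew_iff {lam mu : YoungDiagram} {i j : ℕ} :
    (i, j) ∈ skewShape lam.transpose mu.transpose ↔
      mu.rowLen j ≤ i ∧ i < lam.rowLen j := by
  simp only [skewShape, Set.mem_setOf_eq, YoungDiagram.mem_transpose, Prod.swap_prod_mk,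
    YoungDiagram.mem_iff_lt_rowLen, not_lt]
  tauto

lemma mem_nu_iff {ν : YoungDiagram} {r c : ℕ} :
    (r, c) ∈ ν ↔ r < ν.colLen c := YoungDiagram.mem_iff_lt_colLen

/-- count of entry c+1 in column j of Y -/
def colCountY (lam mu : YoungDiagram) (Y : ℕ → ℕ → ℕ) (j c : ℕ) : ℕ :=
  ((Finset.Ico (mu.rowLen j) (lam.rowLen j)).filter (fun i => Y i j = c + 1)).card

/-- count of entry j+1 in column c of T -/
def colCountT (ν : YoungDiagram) (T : ℕ → ℕ → ℕ) (c j : ℕ) : ℕ :=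
  ((Finset.range (ν.colLen c)).filter (fun r => T r c = j + 1)).card

lemma ncard_colY (lam mu : YoungDiagram) (Y : ℕ → ℕ → ℕ) (j c : ℕ) :
    Set.ncard {i : ℕ | (i, j) ∈ skewShape lam.transpose mu.transpose ∧ Y i j = c + 1}
      = colCountY lam mu Y j c := by
  rw [show {i : ℕ | (i, j) ∈ skewShape lam.transpose mu.transpose ∧ Y i j = c + 1}
      = ↑((Finset.Ico (mu.rowLen j) (lam.rowLen j)).filter (fun i => Y i j = c + 1)) by
    ext i
    simp [mem_skew_iff, Finset.mem_Ico, and_assoc]]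
  exact Set.ncard_coe_finset _

lemma ncard_colT (ν : YoungDiagram) (T : ℕ → ℕ → ℕ) (c j : ℕ) :
    Set.ncard {r : ℕ | (r, c) ∈ ν ∧ T r c = j + 1} = colCountT ν T c j := by
  rw [show {r : ℕ | (r, c) ∈ ν ∧ T r c = j + 1}
      = ↑((Finset.range (ν.colLen c)).filter (fun r => T r c = j + 1)) by
    ext r
    simp [mem_nu_iff]]
  exact Set.ncard_coe_finset _

lemma ncard_contentT (ν : YoungDiagram) (T : ℕ → ℕ → ℕ) (k : ℕ) :
    Set.ncard {p : ℕ × ℕ | p ∈ ydShape ν ∧ T p.1 p.2 = k + 1}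
      = (ν.cells.filter (fun p => T p.1 p.2 = k + 1)).card := by
  rw [show {p : ℕ × ℕ | p ∈ ydShape ν ∧ T p.1 p.2 = k + 1}
      = ↑(ν.cells.filter (fun p => T p.1 p.2 = k + 1)) by
    ext p
    simp [ydShape, YoungDiagram.mem_cells]]
  exact Set.ncard_coe_finset _

lemma ncard_contentY (lam mu : YoungDiagram) (Y : ℕ → ℕ → ℕ) (k : ℕ) :
    Set.ncard {p : ℕ × ℕ | p ∈ skewShape lam.transpose mu.transpose ∧ Y p.1 p.2 = k + 1}
      = ((lam.transpose.cells \ mu.transpose.cells).filter (fun p => Y p.1 p.2 = k + 1)).card := by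
  rw [show {p : ℕ × ℕ | p ∈ skewShape lam.transpose mu.transpose ∧ Y p.1 p.2 = k + 1}
      = ↑((lam.transpose.cells \ mu.transpose.cells).filter (fun p => Y p.1 p.2 = k + 1)) by
    ext p
    simp [skewShape, YoungDiagram.mem_cells]]
  exact Set.ncard_coe_finset _

lemma sumT (ν : YoungDiagram) (T : ℕ → ℕ → ℕ) (j B : ℕ) (hB : ν.rowLen 0 ≤ B) :
    (ν.cells.filter (fun p => T p.1 p.2 = j + 1)).card
      = ∑ c ∈ Finset.range B, colCountT ν T c j := by
  rw [Finset.card_eq_sum_card_fiberwise (f := fun p => p.2) (t := Finset.range B) ?_]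
  · refine Finset.sum_congr rfl ?_
    intro c _
    refine Finset.card_bij' (fun p _ => p.1) (fun r _ => (r, c)) ?_ ?_ ?_ ?_
    · intro p hp
      simp only [Finset.mem_filter, YoungDiagram.mem_cells] at hp
      obtain ⟨⟨hp1, hp2⟩, hp3⟩ := hp
      simp only [Finset.mem_filter, Finset.mem_range]
      subst hp3
      obtain ⟨a, b⟩ := p
      exact ⟨mem_nu_iff.1 hp1, hp2⟩
    · intro r hr
      simp only [colCountT, Finset.mem_filter, Finset.mem_range] at hr
      simp only [Finset.mem_filter, YoungDiagram.mem_cells]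
      exact ⟨⟨mem_nu_iff.2 hr.1, hr.2⟩, trivial⟩
    · intro p hp
      obtain ⟨a, b⟩ := p
      simp only [Finset.mem_filter] at hp
      have hbc : b = c := hp.2
      subst hbc
      rfl
    · intro r hr; rfl
  · intro p hp
    simp only [Finset.mem_coe, Finset.mem_filter, YoungDiagram.mem_cells] at hp
    simp only [Finset.mem_coe, Finset.mem_range]
    have h1 : p.2 < ν.rowLen p.1 := YoungDiagram.mem_iff_lt_rowLen.1 (by
      obtain ⟨a,b⟩ := p; exact hp.1)
    have h2 : ν.rowLen p.1 ≤ ν.rowLen 0 := ν.rowLen_anti 0 p.1 (Nat.zero_le _)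
    omega

lemma mem_skew_cells {lam mu : YoungDiagram} {p : ℕ × ℕ} :
    p ∈ lam.transpose.cells \ mu.transpose.cells ↔
      mu.rowLen p.2 ≤ p.1 ∧ p.1 < lam.rowLen p.2 := by
  obtain ⟨i, j⟩ := p
  rw [Finset.mem_sdiff, YoungDiagram.mem_cells, YoungDiagram.mem_cells]
  exact mem_skew_iff (lam := lam) (mu := mu)

lemma sumY (lam mu : YoungDiagram) (Y : ℕ → ℕ → ℕ) (c B : ℕ) (hB : lam.colLen 0 ≤ B) :
    ((lam.transpose.cells \ mu.transpose.cells).filter (fun p => Y p.1 p.2 = c + 1)).card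
      = ∑ j ∈ Finset.range B, colCountY lam mu Y j c := by
  rw [Finset.card_eq_sum_card_fiberwise (f := fun p => p.2) (t := Finset.range B) ?_]
  · refine Finset.sum_congr rfl ?_
    intro j _
    refine Finset.card_bij' (fun p _ => p.1) (fun i _ => (i, j)) ?_ ?_ ?_ ?_
    · intro p hp
      simp only [Finset.mem_filter] at hp
      obtain ⟨⟨hp1, hp2⟩, hp3⟩ := hp
      rw [mem_skew_cells] at hp1
      simp only [colCountY, Finset.mem_filter, Finset.mem_Ico]
      subst hp3
      exact ⟨hp1, hp2⟩
    · intro i hi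
      simp only [colCountY, Finset.mem_filter, Finset.mem_Ico] at hi
      simp only [Finset.mem_filter]
      exact ⟨⟨mem_skew_cells.2 hi.1, hi.2⟩, trivial⟩
    · intro p hp
      obtain ⟨a, b⟩ := p
      simp only [Finset.mem_filter] at hp
      have hbj : b = j := hp.2
      subst hbj
      rfl
    · intro i hi; rfl
  · intro p hp
    simp only [Finset.mem_coe, Finset.mem_filter] at hp
    have h1 := mem_skew_cells.1 hp.1
    simp only [Finset.mem_coe, Finset.mem_range]
    have h2 : 0 < lam.rowLen p.2 := by omega
    have h3 : (p.2, 0) ∈ lam := YoungDiagram.mem_iff_lt_rowLen.2 h2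
    have h4 : p.2 < lam.colLen 0 := YoungDiagram.mem_iff_lt_colLen.1 h3
    omega

lemma colCountT_zero (ν : YoungDiagram) (T : ℕ → ℕ → ℕ) (j : ℕ) {c : ℕ}
    (hc : ν.rowLen 0 ≤ c) : colCountT ν T c j = 0 := by
  have : ν.colLen c = 0 := by
    by_contra h
    have : (0, c) ∈ ν := YoungDiagram.mem_iff_lt_colLen.2 (by omega)
    have := YoungDiagram.mem_iff_lt_rowLen.1 this
    omega
  simp [colCountT, this]

lemma colCountY_zero (lam mu : YoungDiagram) (Y : ℕ → ℕ → ℕ) (c : ℕ) {j : ℕ}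
    (hj : lam.colLen 0 ≤ j) : colCountY lam mu Y j c = 0 := by
  have : lam.rowLen j = 0 := by
    by_contra h
    have : (j, 0) ∈ lam := YoungDiagram.mem_iff_lt_rowLen.2 (by omega)
    have := YoungDiagram.mem_iff_lt_colLen.1 this
    omega
  simp [colCountY, this]


lemma sum_colCountT (ν : YoungDiagram) (T : ℕ → ℕ → ℕ) {B : ℕ} (c : ℕ)
    (hpos : ∀ r, (r, c) ∈ ν → 1 ≤ T r c)
    (hval : ∀ r, (r, c) ∈ ν → T r c - 1 < B) :
    ∑ j ∈ Finset.range B, colCountT ν T c j = ν.colLen c := by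
  symm
  rw [show ν.colLen c = (Finset.range (ν.colLen c)).card by simp]
  rw [Finset.card_eq_sum_card_fiberwise (f := fun r => T r c - 1) (t := Finset.range B) ?_]
  · refine Finset.sum_congr rfl ?_
    intro j _
    apply congrArg Finset.card
    ext r
    simp only [Finset.mem_filter, Finset.mem_range, colCountT]
    constructor
    · rintro ⟨hr, hv⟩
      have := hpos r (mem_nu_iff.2 hr)
      exact ⟨hr, by omega⟩
    · rintro ⟨hr, hv⟩
      exact ⟨hr, by omega⟩
  · intro r hr
    simp only [Finset.mem_coe, Finset.mem_range] at hr ⊢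
    exact hval r (mem_nu_iff.2 hr)

lemma sum_colCountY (lam mu : YoungDiagram) (Y : ℕ → ℕ → ℕ) {B : ℕ} (j : ℕ)
    (hpos : ∀ i, (i, j) ∈ skewShape lam.transpose mu.transpose → 1 ≤ Y i j)
    (hval : ∀ i, (i, j) ∈ skewShape lam.transpose mu.transpose → Y i j - 1 < B) :
    ∑ c ∈ Finset.range B, colCountY lam mu Y j c = lam.rowLen j - mu.rowLen j := by
  symm
  rw [show lam.rowLen j - mu.rowLen j = (Finset.Ico (mu.rowLen j) (lam.rowLen j)).card by
    rw [Nat.card_Ico]]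
  rw [Finset.card_eq_sum_card_fiberwise (f := fun i => Y i j - 1) (t := Finset.range B) ?_]
  · refine Finset.sum_congr rfl ?_
    intro c _
    apply congrArg Finset.card
    ext i
    simp only [Finset.mem_filter, Finset.mem_Ico, colCountY]
    constructor
    · rintro ⟨hi, hv⟩
      have := hpos i (mem_skew_iff.2 hi)
      exact ⟨hi, by omega⟩
    · rintro ⟨hi, hv⟩
      exact ⟨hi, by omega⟩
  · intro i hi
    simp only [Finset.mem_coe, Finset.mem_Ico] at hi
    simp only [Finset.mem_coe, Finset.mem_range]
    exact hval i (mem_skew_iff.2 hi)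

lemma Tval_lt {lam mu ν : YoungDiagram} {T : ℕ → ℕ → ℕ} (hT : MemCSTshape lam mu ν T)
    {r c : ℕ} (h : (r, c) ∈ ν) : T r c - 1 < lam.colLen 0 := by
  have hpos : 1 ≤ T r c := hT.1.1 r c h
  set j := T r c - 1 with hj
  have h2 := hT.2 j
  rw [ncard_contentT] at h2
  have hmem : (r, c) ∈ ν.cells.filter (fun p => T p.1 p.2 = j + 1) := by
    simp only [Finset.mem_filter, YoungDiagram.mem_cells]
    exact ⟨h, by omega⟩
  have hcard : 0 < (ν.cells.filter (fun p => T p.1 p.2 = j + 1)).card :=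
    Finset.card_pos.2 ⟨_, hmem⟩
  have h2' : (ν.cells.filter (fun p => T p.1 p.2 = j + 1)).card
      = lam.rowLen j - mu.rowLen j := h2
  have h3 : 0 < lam.rowLen j := by omega
  exact YoungDiagram.mem_iff_lt_colLen.1 (YoungDiagram.mem_iff_lt_rowLen.2 h3)

lemma Yval_lt {lam mu ν : YoungDiagram} {Y : ℕ → ℕ → ℕ} (hY : MemCSTtranspose lam mu ν Y)
    {i j : ℕ} (h : (i, j) ∈ skewShape lam.transpose mu.transpose) :
    Y i j - 1 < ν.rowLen 0 := by
  have hpos : 1 ≤ Y i j := hY.1.1 i j h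
  set c := Y i j - 1 with hc
  have h2 := hY.2 c
  rw [ncard_contentY] at h2
  have hmem : (i, j) ∈ (lam.transpose.cells \ mu.transpose.cells).filter
      (fun p => Y p.1 p.2 = c + 1) := by
    simp only [Finset.mem_filter]
    exact ⟨mem_skew_cells.2 (mem_skew_iff.1 h), by omega⟩
  have hcard := Finset.card_pos.2 ⟨_, hmem⟩
  have h2' : ((lam.transpose.cells \ mu.transpose.cells).filter
      (fun p => Y p.1 p.2 = c + 1)).card = ν.colLen c := h2
  have h3 : 0 < ν.colLen c := by omega
  exact YoungDiagram.mem_iff_lt_rowLen.1 (YoungDiagram.mem_iff_lt_colLen.2 h3)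

lemma hab' {lam mu : YoungDiagram} (hsub : ∀ j, mu.rowLen j ≤ lam.rowLen j) (j : ℕ) :
    mu.rowLen j + (lam.rowLen j - mu.rowLen j) = lam.rowLen j := by
  have := hsub j; omega

lemma colOK_Y_iff (lam mu : YoungDiagram) (hsub : ∀ j, mu.rowLen j ≤ lam.rowLen j)
    (Y : ℕ → ℕ → ℕ) (m : ℕ → ℕ → ℕ) :
    (IsColumnStandard (skewShape lam.transpose mu.transpose) Y ∧
      ∀ j c, colCountY lam mu Y j c = m j c)
    ↔ ∀ j, ColOK (m j) (mu.rowLen j) (lam.rowLen j - mu.rowLen j) (fun i => Y i j) := by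
  have hIco : ∀ j : ℕ,
      Finset.Ico (mu.rowLen j) (mu.rowLen j + (lam.rowLen j - mu.rowLen j))
        = Finset.Ico (mu.rowLen j) (lam.rowLen j) := fun j => by rw [hab' hsub j]
  constructor
  · rintro ⟨⟨hpos, hzero, hmono⟩, hcount⟩ j
    refine ⟨?_, ?_, ?_, ?_⟩
    · intro i h1 h2
      exact hpos i j (mem_skew_iff.2 ⟨h1, by have := hab' hsub j; omega⟩)
    · intro i h
      refine hzero i j ?_
      intro hc
      rw [mem_skew_iff] at hc
      exact h ⟨hc.1, by have := hab' hsub j; omega⟩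
    · intro i i' h1 h2 h3
      exact hmono i i' j (mem_skew_iff.2 ⟨h1, by have := hab' hsub j; omega⟩)
        (mem_skew_iff.2 ⟨by omega, by have := hab' hsub j; omega⟩) h2
    · intro c
      rw [hIco j]
      exact hcount j c
  · intro hok
    refine ⟨⟨?_, ?_, ?_⟩, ?_⟩
    · intro i j hij
      rw [mem_skew_iff] at hij
      exact (hok j).1 i hij.1 (by have := hab' hsub j; omega)
    · intro i j hij
      refine (hok j).2.1 i ?_
      intro hc
      exact hij (mem_skew_iff.2 ⟨hc.1, by have := hab' hsub j; omega⟩)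
    · intro i i' j h1 h2 hle
      rw [mem_skew_iff] at h1 h2
      exact (hok j).2.2.1 i i' h1.1 hle (by have := hab' hsub j; omega)
    · intro j c
      have := (hok j).2.2.2 c
      rw [hIco j] at this
      exact this

lemma colOK_T_iff (ν : YoungDiagram) (T : ℕ → ℕ → ℕ) (m : ℕ → ℕ → ℕ) :
    (IsColumnStandard (ydShape ν) T ∧ ∀ c j, colCountT ν T c j = m c j)
    ↔ ∀ c, ColOK (m c) 0 (ν.colLen c) (fun r => T r c) := by
  have hIco : ∀ c : ℕ, Finset.Ico 0 (0 + ν.colLen c) = Finset.range (ν.colLen c) := by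
    intro c; rw [Nat.zero_add, Finset.range_eq_Ico]
  have hmem : ∀ r c : ℕ, ((r, c) ∈ ydShape ν) ↔ r < ν.colLen c := fun r c => mem_nu_iff
  constructor
  · rintro ⟨⟨hpos, hzero, hmono⟩, hcount⟩ c
    refine ⟨?_, ?_, ?_, ?_⟩
    · intro r _ h2
      exact hpos r c ((hmem r c).2 (by omega))
    · intro r h
      exact hzero r c (fun hc => h ⟨Nat.zero_le r, by have := (hmem r c).1 hc; omega⟩)
    · intro r r' h1 h2 h3
      exact hmono r r' c ((hmem r c).2 (by omega)) ((hmem r' c).2 (by omega)) h2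
    · intro j
      rw [hIco c]
      exact hcount c j
  · intro hok
    refine ⟨⟨?_, ?_, ?_⟩, ?_⟩
    · intro r c h
      exact (hok c).1 r (Nat.zero_le r) (by have := (hmem r c).1 h; omega)
    · intro r c h
      exact (hok c).2.1 r (fun hc => h ((hmem r c).2 (by omega)))
    · intro r r' c h1 h2 h3
      exact (hok c).2.2.1 r r' (Nat.zero_le r) h3 (by have := (hmem r' c).1 h2; omega)
    · intro c j
      have := (hok c).2.2.2 j
      rw [hIco c] at this
      exact this

end ABW9


/-- **Statement 9** (the transpose bijection `φ : CST^ν(λ/μ) → CST^{λᵗ/μᵗ}(νᵗ)`).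
Let `μ ⊆ λ` and `ν` be partitions with `|μ| + |ν| = |λ|`.  The assignment sending
a column-standard tableau `T` of shape `ν` and content `λ/μ` to the tableau `Y` of shape
`λᵗ/μᵗ` whose `j`-th column is the weakly increasing sequence of column indices, with
multiplicity, of the occurrences of the entry `j` in `T`, is a well-defined bijection
onto the column-standard tableaux of shape `λᵗ/μᵗ` and content `νᵗ`.  This is expressed
by: every `T` corresponds to a unique such `Y`, and every `Y` arises from a unique `T`. -/
theorem statement_9 (lam mu ν : YoungDiagram)
    (hsub : ∀ i, mu.rowLen i ≤ lam.rowLen i)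
    (hsize : mu.card + ν.card = lam.card) :
    (∀ T : ℕ → ℕ → ℕ, MemCSTshape lam mu ν T →
      ∃! Y : ℕ → ℕ → ℕ, MemCSTtranspose lam mu ν Y ∧ Corr lam mu ν T Y) ∧
    (∀ Y : ℕ → ℕ → ℕ, MemCSTtranspose lam mu ν Y →
      ∃! T : ℕ → ℕ → ℕ, MemCSTshape lam mu ν T ∧ Corr lam mu ν T Y) := by
  constructor
  · intro T hT
    have hBT : ∀ j c, ν.rowLen 0 ≤ c → ABW9.colCountT ν T c j = 0 :=
      fun j c hc => ABW9.colCountT_zero ν T j hc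
    have htotT : ∀ j, ABW9.S (fun c => ABW9.colCountT ν T c j) (ν.rowLen 0)
        = lam.rowLen j - mu.rowLen j := fun j => by
      have h2 := hT.2 j
      rw [ABW9.ncard_contentT, ABW9.sumT ν T j (ν.rowLen 0) le_rfl] at h2
      exact h2
    set Y : ℕ → ℕ → ℕ := fun i j =>
      ABW9.colg (fun c => ABW9.colCountT ν T c j) (mu.rowLen j)
        (lam.rowLen j - mu.rowLen j) i with hYdef
    have hok : ∀ j, ABW9.ColOK (fun c => ABW9.colCountT ν T c j) (mu.rowLen j)
        (lam.rowLen j - mu.rowLen j) (fun i => Y i j) :=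
      fun j => ABW9.colg_ok _ (hBT j) (htotT j)
    have hcsY := (ABW9.colOK_Y_iff lam mu hsub Y (fun j c => ABW9.colCountT ν T c j)).2 hok
    have hcorr : Corr lam mu ν T Y := by
      intro j c
      rw [ABW9.ncard_colY, ABW9.ncard_colT, hcsY.2 j c]
    have hcontentY : HasContentFn (skewShape lam.transpose mu.transpose)
        (fun c => ν.colLen c) Y := by
      intro c
      rw [ABW9.ncard_contentY, ABW9.sumY lam mu Y c (lam.colLen 0) le_rfl]
      rw [Finset.sum_congr rfl (fun j _ => hcsY.2 j c)]
      exact ABW9.sum_colCountT ν T c (fun r h => hT.1.1 r c h)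
        (fun r h => ABW9.Tval_lt hT h)
    refine ⟨Y, ⟨⟨hcsY.1, hcontentY⟩, hcorr⟩, ?_⟩
    intro Y' hY'
    have hcount' : ∀ j c, ABW9.colCountY lam mu Y' j c = ABW9.colCountT ν T c j := by
      intro j c
      have := hY'.2 j c
      rwa [ABW9.ncard_colY, ABW9.ncard_colT] at this
    have hok' := (ABW9.colOK_Y_iff lam mu hsub Y'
      (fun j c => ABW9.colCountT ν T c j)).1 ⟨hY'.1.1, hcount'⟩
    funext i j
    exact ABW9.col_unique (hBT j) (htotT j) (hok' j) (hok j) i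
  · intro Y hY
    have hBY : ∀ c j, lam.colLen 0 ≤ j → ABW9.colCountY lam mu Y j c = 0 :=
      fun c j hj => ABW9.colCountY_zero lam mu Y c hj
    have htotY : ∀ c, ABW9.S (fun j => ABW9.colCountY lam mu Y j c) (lam.colLen 0)
        = ν.colLen c := fun c => by
      have h2 := hY.2 c
      rw [ABW9.ncard_contentY, ABW9.sumY lam mu Y c (lam.colLen 0) le_rfl] at h2
      exact h2
    set T : ℕ → ℕ → ℕ := fun r c =>
      ABW9.colg (fun j => ABW9.colCountY lam mu Y j c) 0 (ν.colLen c) r with hTdef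
    have hok : ∀ c, ABW9.ColOK (fun j => ABW9.colCountY lam mu Y j c) 0 (ν.colLen c)
        (fun r => T r c) := fun c => ABW9.colg_ok _ (hBY c) (htotY c)
    have hcsT := (ABW9.colOK_T_iff ν T (fun c j => ABW9.colCountY lam mu Y j c)).2 hok
    have hcorr : Corr lam mu ν T Y := by
      intro j c
      rw [ABW9.ncard_colY, ABW9.ncard_colT, hcsT.2 c j]
    have hcontentT : HasContentFn (ydShape ν) (fun k => lam.rowLen k - mu.rowLen k) T := by
      intro j
      rw [ABW9.ncard_contentT, ABW9.sumT ν T j (ν.rowLen 0) le_rfl]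
      rw [Finset.sum_congr rfl (fun c _ => hcsT.2 c j)]
      exact ABW9.sum_colCountY lam mu Y j (fun i h => hY.1.1 i j h)
        (fun i h => ABW9.Yval_lt hY h)
    refine ⟨T, ⟨⟨hcsT.1, hcontentT⟩, hcorr⟩, ?_⟩
    intro T' hT'
    have hcount' : ∀ c j, ABW9.colCountT ν T' c j = ABW9.colCountY lam mu Y j c := by
      intro c j
      have := hT'.2 j c
      rw [ABW9.ncard_colY, ABW9.ncard_colT] at this
      exact this.symm
    have hok' := (ABW9.colOK_T_iff ν T'
      (fun c j => ABW9.colCountY lam mu Y j c)).1 ⟨hT'.1.1, hcount'⟩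
    funext r c
    exact ABW9.col_unique (hBY c) (htotY c) (hok' c) (hok c) r
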